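/- Let G be an ample groupoid with Hausdorff unit space. If the inverse semigroup Γ_c(G) of compact Hausdorff open local bisections admits binary meets (greatest lower bounds in the natural partial order), then the arrow space of G is Hausdorff; conversely if G is Hausdorff then Γ_c(G) has binary meets given by intersections. -/

import Mathlib

/-- A topological groupoid whose arrows form the space `A`; objects are identified
with identity arrows via the source map. All structure maps are continuous and the
source map is a local homeomorphism (étale). -/
structure AmpleGroupoid (A : Type*) [TopologicalSpace A] where
  src : A → A
  rng : A → A
  comp : A → A → A
  inv : A → A
  src_src : ∀ a, src (src a) = src a
  rng_src : ∀ a, rng (src a) = src a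
  src_rng : ∀ a, src (rng a) = rng a
  rng_rng : ∀ a, rng (rng a) = rng a
  src_comp : ∀ a b, src a = rng b → src (comp a b) = src b
  rng_comp : ∀ a b, src a = rng b → rng (comp a b) = rng a
  comp_assoc : ∀ a b c, src a = rng b → src b = rng c →
    comp (comp a b) c = comp a (comp b c)
  id_comp : ∀ a, comp (rng a) a = a
  comp_id : ∀ a, comp a (src a) = a
  inv_comp : ∀ a, comp (inv a) a = src a
  comp_inv : ∀ a, comp a (inv a) = rng a
  src_inv : ∀ a, src (inv a) = rng a
  rng_inv : ∀ a, rng (inv a) = src a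
  continuous_inv : Continuous inv
  continuous_comp : Continuous fun p : {p : A × A // src p.1 = rng p.2} =>
    comp p.1.1 p.1.2
  isLocalHomeomorph_src : IsLocalHomeomorph src
  isLocalHomeomorph_rng : IsLocalHomeomorph rng

namespace AmpleGroupoid

variable {A : Type*} [TopologicalSpace A] (G : AmpleGroupoid A)

/-- The unit space (identity arrows). -/
def units : Set A := Set.range G.src

/-- The unit space has a basis of compact open sets (ampleness). -/
def AmpleUnits : Prop := ∀ U : Set A, IsOpen U → ∀ a ∈ U ∩ G.units,
  ∃ K : Set A, IsCompact K ∧ IsOpen K ∧ a ∈ K ∧ K ⊆ U ∩ G.units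

/-- The unit space is Hausdorff. -/
def UnitsT2 : Prop := ∀ a ∈ G.units, ∀ b ∈ G.units, a ≠ b →
  ∃ U V : Set A, IsOpen U ∧ IsOpen V ∧ a ∈ U ∧ b ∈ V ∧ Disjoint U V

/-- A (open) local bisection: an open set on which both `src` and `rng` are injective. -/
def IsBisection (U : Set A) : Prop :=
  IsOpen U ∧ Set.InjOn G.src U ∧ Set.InjOn G.rng U

/-- Pointwise product of subsets of arrows. -/
def setMul (U V : Set A) : Set A :=
  {c | ∃ a ∈ U, ∃ b ∈ V, G.src a = G.rng b ∧ c = G.comp a b}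

/-- Pointwise inverse of a subset of arrows. -/
def setInv (U : Set A) : Set A := G.inv '' U

/-- Members of `Γ_c(G)`: compact open local bisections. -/
def Gamma (U : Set A) : Prop := IsCompact U ∧ G.IsBisection U

end AmpleGroupoid

namespace AmpleGroupoid

/-- A compact Hausdorff open local bisection (member of `Γ_c(G)` in the possibly
non-Hausdorff setting). -/
def GammaH {A : Type*} [TopologicalSpace A] (G : AmpleGroupoid A) (U : Set A) : Prop :=
  IsCompact U ∧ G.IsBisection U ∧ T2Space U

end AmpleGroupoid

namespace AmpleGroupoid

variable {A : Type*} [TopologicalSpace A] (G : AmpleGroupoid A)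

lemma continuous_src : Continuous G.src := G.isLocalHomeomorph_src.continuous

/-- Any set on which `src` is injective is Hausdorff, given a Hausdorff unit space. -/
lemma t2_of_injOn_src (hT2 : G.UnitsT2) {U : Set A} (h : Set.InjOn G.src U) :
    T2Space U := by
  constructor
  intro x y hxy
  have hsne : G.src x.1 ≠ G.src y.1 := fun he => hxy (Subtype.ext (h x.2 y.2 he))
  obtain ⟨O1, O2, hO1, hO2, hm1, hm2, hd⟩ :=
    hT2 _ ⟨x.1, rfl⟩ _ ⟨y.1, rfl⟩ hsne
  exact ⟨Subtype.val ⁻¹' (G.src ⁻¹' O1), Subtype.val ⁻¹' (G.src ⁻¹' O2),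
    (hO1.preimage G.continuous_src).preimage continuous_subtype_val,
    (hO2.preimage G.continuous_src).preimage continuous_subtype_val,
    hm1, hm2, ((hd.preimage G.src).preimage Subtype.val)⟩

/-- Every point has arbitrarily small compact Hausdorff open bisection neighbourhoods. -/
lemma exists_gammaH_nhd (hG : G.AmpleUnits) (hT2 : G.UnitsT2)
    {a : A} {S : Set A} (hS : IsOpen S) (haS : a ∈ S) :
    ∃ U : Set A, G.GammaH U ∧ a ∈ U ∧ U ⊆ S := by
  obtain ⟨e, hae, hesrc⟩ := G.isLocalHomeomorph_src a
  obtain ⟨f, haf, hfrng⟩ := G.isLocalHomeomorph_rng a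
  set O := (e.source ∩ f.source) ∩ S with hO
  have hOopen : IsOpen O := (e.open_source.inter f.open_source).inter hS
  have haO : a ∈ O := ⟨⟨hae, haf⟩, haS⟩
  have hOsub : O ⊆ e.source := fun x hx => hx.1.1
  have hOsubf : O ⊆ f.source := fun x hx => hx.1.2
  have himg : IsOpen (e '' O) := e.isOpen_image_of_subset_source hOopen hOsub
  have hsa : G.src a ∈ e '' O ∩ G.units :=
    ⟨⟨a, haO, (congrFun hesrc a).symm⟩, ⟨a, rfl⟩⟩
  obtain ⟨K, hKc, hKo, haK, hKsub⟩ := hG (e '' O) himg (G.src a) hsa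
  have hKt : K ⊆ e.target := by
    intro k hk
    obtain ⟨x, hxO, rfl⟩ := (hKsub hk).1
    exact e.map_source (hOsub hxO)
  have hUeq : O ∩ G.src ⁻¹' K = e.symm '' K := by
    ext x
    constructor
    · rintro ⟨hxO, hxK⟩
      refine ⟨G.src x, hxK, ?_⟩
      rw [hesrc]; exact e.left_inv (hOsub hxO)
    · rintro ⟨k, hk, rfl⟩
      obtain ⟨x, hxO, rfl⟩ := (hKsub hk).1
      rw [e.left_inv (hOsub hxO)]
      refine ⟨hxO, ?_⟩
      show G.src x ∈ K
      rw [hesrc]; exact hk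
  have hUc : IsCompact (O ∩ G.src ⁻¹' K) :=
    hUeq ▸ hKc.image_of_continuousOn (e.continuousOn_symm.mono hKt)
  have hUopen : IsOpen (O ∩ G.src ⁻¹' K) :=
    hOopen.inter (hKo.preimage G.continuous_src)
  have hsi : Set.InjOn G.src (O ∩ G.src ⁻¹' K) := fun x hx y hy hxy =>
    e.injOn (hOsub hx.1) (hOsub hy.1) (hesrc ▸ hxy)
  have hri : Set.InjOn G.rng (O ∩ G.src ⁻¹' K) := fun x hx y hy hxy =>
    f.injOn (hOsubf hx.1) (hOsubf hy.1) (hfrng ▸ hxy)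
  exact ⟨O ∩ G.src ⁻¹' K, ⟨hUc, ⟨hUopen, hsi, hri⟩, G.t2_of_injOn_src hT2 hsi⟩,
    ⟨haO, haK⟩, fun x hx => hx.1.2⟩

end AmpleGroupoid

open AmpleGroupoid in
/-- For an ample groupoid with Hausdorff unit space, if the inverse
semigroup `Γ_c(G)` of compact Hausdorff open local bisections admits binary meets
(for the natural partial order, which is containment), then the arrow space is
Hausdorff; conversely, if the arrow space is Hausdorff then intersections provide
binary meets in `Γ_c(G)`. -/
theorem stmt19 {A : Type*} [TopologicalSpace A]
    (G : AmpleGroupoid A) (hG : G.AmpleUnits) (hT2 : G.UnitsT2) :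
    ((∀ U V : Set A, G.GammaH U → G.GammaH V →
        ∃ W : Set A, G.GammaH W ∧ W ⊆ U ∧ W ⊆ V ∧
          ∀ W' : Set A, G.GammaH W' → W' ⊆ U → W' ⊆ V → W' ⊆ W) →
      T2Space A) ∧
    (T2Space A → ∀ U V : Set A, G.GammaH U → G.GammaH V →
      G.GammaH (U ∩ V) ∧ U ∩ V ⊆ U ∧ U ∩ V ⊆ V ∧
        ∀ W' : Set A, G.GammaH W' → W' ⊆ U → W' ⊆ V → W' ⊆ U ∩ V) := by
  constructor
  · -- meets imply Hausdorff
    intro hmeet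
    constructor
    intro a b hab
    by_cases hs : G.src a = G.src b
    · by_cases hr : G.rng a = G.rng b
      · -- the hard case: same source and range
        obtain ⟨U, hU, haU, -⟩ := G.exists_gammaH_nhd hG hT2 isOpen_univ (Set.mem_univ a)
        obtain ⟨V, hV, hbV, -⟩ := G.exists_gammaH_nhd hG hT2 isOpen_univ (Set.mem_univ b)
        have haV : a ∉ V := fun haV => hab (hV.2.1.2.1 haV hbV hs)
        have hbU : b ∉ U := fun hbU => hab (hU.2.1.2.1 haU hbU hs)
        obtain ⟨W, hW, hWU, hWV, hWmax⟩ := hmeet U V hU hV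
        have hIopen : IsOpen (U ∩ V) := hU.2.1.1.inter hV.2.1.1
        have hWeq : W = U ∩ V := by
          refine Set.Subset.antisymm (Set.subset_inter hWU hWV) ?_
          intro x hx
          obtain ⟨K, hK, hxK, hKsub⟩ := G.exists_gammaH_nhd hG hT2 hIopen hx
          exact hWmax K hK (hKsub.trans Set.inter_subset_left)
            (hKsub.trans Set.inter_subset_right) hxK
        have hIc : IsCompact (U ∩ V) := hWeq ▸ hW.1
        -- U ∩ V is closed in U (resp. V) since these are Hausdorff and U ∩ V compact
        have key : ∀ P Q : Set A, G.GammaH P → IsCompact (P ∩ Q) →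
            ∃ C : Set A, IsClosed C ∧ P ∩ C = P ∩ Q := by
          intro P Q hP hPQ
          haveI : T2Space P := hP.2.2
          have hsub : IsCompact ((Subtype.val : P → A) ⁻¹' Q) := by
            rw [Topology.IsEmbedding.subtypeVal.isCompact_iff]
            have : (Subtype.val : P → A) '' (Subtype.val ⁻¹' Q) = P ∩ Q := by
              rw [Subtype.image_preimage_coe]
            rwa [this]
          have hclosed : IsClosed ((Subtype.val : P → A) ⁻¹' Q) := hsub.isClosed
          obtain ⟨C, hC, hCeq⟩ := isClosed_induced_iff.mp hclosed
          refine ⟨C, hC, ?_⟩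
          ext x
          constructor
          · rintro ⟨hxP, hxC⟩
            have : (⟨x, hxP⟩ : P) ∈ (Subtype.val : P → A) ⁻¹' Q := by
              rw [← hCeq]; exact hxC
            exact ⟨hxP, this⟩
          · rintro ⟨hxP, hxQ⟩
            have : (⟨x, hxP⟩ : P) ∈ (Subtype.val : P → A) ⁻¹' C := by
              rw [hCeq]; exact hxQ
            exact ⟨hxP, this⟩
        obtain ⟨C, hCcl, hCeq⟩ := key U V hU hIc
        obtain ⟨D, hDcl, hDeq⟩ := key V U hV (Set.inter_comm U V ▸ hIc)
        refine ⟨U ∩ Cᶜ, V ∩ Dᶜ, hU.2.1.1.inter hCcl.isOpen_compl,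
          hV.2.1.1.inter hDcl.isOpen_compl, ⟨haU, ?_⟩, ⟨hbV, ?_⟩, ?_⟩
        · intro haC
          have h' : a ∈ U ∩ C := ⟨haU, haC⟩
          rw [hCeq] at h'
          exact haV h'.2
        · intro hbD
          have h' : b ∈ V ∩ D := ⟨hbV, hbD⟩
          rw [hDeq] at h'
          exact hbU h'.2
        · rw [Set.disjoint_left]
          rintro x ⟨hxU, hxC⟩ ⟨hxV, -⟩
          have h' : x ∈ U ∩ C := by rw [hCeq]; exact ⟨hxU, hxV⟩
          exact hxC h'.2
      · -- different ranges: separate via rng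
        obtain ⟨O1, O2, hO1, hO2, hm1, hm2, hd⟩ :=
          hT2 _ ⟨G.rng a, G.src_rng a⟩ _ ⟨G.rng b, G.src_rng b⟩ hr
        exact ⟨G.rng ⁻¹' O1, G.rng ⁻¹' O2,
          hO1.preimage G.isLocalHomeomorph_rng.continuous,
          hO2.preimage G.isLocalHomeomorph_rng.continuous, hm1, hm2, hd.preimage G.rng⟩
    · -- different sources: separate via src
      obtain ⟨O1, O2, hO1, hO2, hm1, hm2, hd⟩ :=
        hT2 _ ⟨a, rfl⟩ _ ⟨b, rfl⟩ hs
      exact ⟨G.src ⁻¹' O1, G.src ⁻¹' O2, hO1.preimage G.continuous_src,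
        hO2.preimage G.continuous_src, hm1, hm2, hd.preimage G.src⟩
  · -- Hausdorff implies intersections are meets
    intro hA U V hU hV
    refine ⟨⟨hU.1.inter hV.1, ⟨hU.2.1.1.inter hV.2.1.1,
        hU.2.1.2.1.mono Set.inter_subset_left, hU.2.1.2.2.mono Set.inter_subset_left⟩,
        inferInstance⟩,
      Set.inter_subset_left, Set.inter_subset_right,
      fun W' _ h1 h2 => Set.subset_inter h1 h2⟩
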